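/- (Corollary 3.3) For every finite simple graph G with vertex set V and edge set E, every positive integer q, and all real J and β with v := exp(βJ) − 1 ≠ 0, the Potts model partition function with Hamiltonian h₂ satisfies P₂(G;q,β) = q^{k(G)} · (v+1)^{−|E|} · v^{|V| − k(G)} · t(G; (q+v)/v, v+1), where t is the Tutte polynomial given by its spanning-subgraph expansion t(G;x,y) = ∑_{A ⊆ E} (x−1)^{k(A) − k(G)} (y−1)^{|A| − |V| + k(A)}. -/

import Mathlib

open Finset

/-- Number of connected components of the spanning subgraph `(V, A)`. -/
noncomputable def numComp {V : Type*} [Fintype V] (A : Finset (Sym2 V)) : ℕ :=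
  Nat.card (SimpleGraph.fromEdgeSet (A : Set (Sym2 V))).ConnectedComponent

/-- Hamiltonian `h₂(σ) = J·|{e = {i,j} ∈ E : σ i ≠ σ j}|`. -/
noncomputable def hamTwo {V : Type*} [Fintype V] [DecidableEq V]
    (G : SimpleGraph V) [DecidableRel G.Adj] (J : ℝ) {q : ℕ} (σ : V → Fin q) : ℝ :=
  J * ((G.edgeFinset.filter fun e => ¬ (e.map σ).IsDiag).card : ℝ)

/-- The Tutte polynomial via its spanning-subgraph expansion:
`t(G;x,y) = ∑_{A ⊆ E} (x−1)^{k(A) − k(G)} (y−1)^{|A| − |V| + k(A)}`. -/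
noncomputable def tutte {V : Type*} [Fintype V] [DecidableEq V]
    (G : SimpleGraph V) [DecidableRel G.Adj] (x y : ℝ) : ℝ :=
  ∑ A ∈ G.edgeFinset.powerset,
    (x - 1) ^ ((numComp A : ℤ) - (numComp G.edgeFinset : ℤ)) *
      (y - 1) ^ ((A.card : ℤ) - (Fintype.card V : ℤ) + (numComp A : ℤ))

section
variable {V : Type*} [Fintype V] [DecidableEq V]

omit [Fintype V] [DecidableEq V] in
lemma reach_eq {A : Finset (Sym2 V)} {q : ℕ} (σ : V → Fin q)
    (h : ∀ e ∈ A, (e.map σ).IsDiag) {a b : V}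
    (hr : (SimpleGraph.fromEdgeSet (A : Set (Sym2 V))).Reachable a b) : σ a = σ b := by
  obtain ⟨w⟩ := hr
  induction w with
  | nil => rfl
  | cons hadj p ih =>
    rw [SimpleGraph.fromEdgeSet_adj _] at hadj
    have hd := h _ hadj.1
    rw [Sym2.map_pair_eq, Sym2.mk_isDiag_iff] at hd
    exact hd.trans ih

noncomputable def agreeEquiv (A : Finset (Sym2 V)) (q : ℕ) :
    {σ : V → Fin q // ∀ e ∈ A, (e.map σ).IsDiag} ≃
      ((SimpleGraph.fromEdgeSet (A : Set (Sym2 V))).ConnectedComponent → Fin q) where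
  toFun σ := Quot.lift σ.1 fun a b hr => reach_eq σ.1 σ.2 hr
  invFun g := ⟨fun x => g ((SimpleGraph.fromEdgeSet (A : Set (Sym2 V))).connectedComponentMk x),
    by
      intro e he
      induction e with
      | _ i j =>
        rw [Sym2.map_pair_eq, Sym2.mk_isDiag_iff]
        by_cases hij : i = j
        · rw [hij]
        · have hadj : (SimpleGraph.fromEdgeSet (A : Set (Sym2 V))).Adj i j :=
            (SimpleGraph.fromEdgeSet_adj _).mpr ⟨he, hij⟩
          rw [SimpleGraph.ConnectedComponent.connectedComponentMk_eq_of_adj hadj]⟩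
  left_inv σ := by ext x; rfl
  right_inv g := by
    ext c
    induction c using SimpleGraph.ConnectedComponent.ind with
    | _ v => rfl

lemma card_agree (A : Finset (Sym2 V)) (q : ℕ) :
    ((univ : Finset (V → Fin q)).filter fun σ => ∀ e ∈ A, (e.map σ).IsDiag).card
      = q ^ numComp A := by
  classical
  rw [← Fintype.card_subtype, ← Nat.card_eq_fintype_card, Nat.card_congr (agreeEquiv A q),
    Nat.card_fun, Nat.card_eq_fintype_card, Fintype.card_fin, numComp]

end

lemma keyalg (q v w : ℝ) (hq : q ≠ 0) (hv : v ≠ 0) (kG kA n a : ℤ) :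
    q ^ kG * w * v ^ (n - kG) * ((q / v) ^ (kA - kG) * v ^ (a - n + kA)) =
      v ^ a * q ^ kA * w := by
  rw [div_zpow, div_eq_mul_inv, ← zpow_neg]
  calc q ^ kG * w * v ^ (n - kG) * (q ^ (kA - kG) * v ^ (-(kA - kG)) * v ^ (a - n + kA))
      = q ^ kG * q ^ (kA - kG) * (v ^ (n - kG) * v ^ (-(kA - kG)) * v ^ (a - n + kA)) * w := by
        ring
    _ = q ^ (kG + (kA - kG)) * v ^ ((n - kG) + -(kA - kG) + (a - n + kA)) * w := by
        rw [← zpow_add₀ hq, ← zpow_add₀ hv, ← zpow_add₀ hv]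
    _ = v ^ a * q ^ kA * w := by
        rw [show kG + (kA - kG) = kA by ring, show (n - kG) + -(kA - kG) + (a - n + kA) = a by ring]
        ring

/-- **Corollary 3.3.** With `v = exp(βJ) − 1 ≠ 0`,
`P₂(G;q,β) = q^{k(G)} · (v+1)^{−|E|} · v^{|V| − k(G)} · t(G; (q+v)/v, v+1)`. -/
theorem pottsTwo_eq_tutte {V : Type*} [Fintype V] [DecidableEq V]
    (G : SimpleGraph V) [DecidableRel G.Adj] (q : ℕ) (hq : 0 < q) (J β : ℝ)
    (v : ℝ) (hv : v = Real.exp (β * J) - 1) (hv0 : v ≠ 0) :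
    (∑ σ : V → Fin q, Real.exp (-β * hamTwo G J σ)) =
      (q : ℝ) ^ (numComp G.edgeFinset) *
        (v + 1) ^ (-(G.edgeFinset.card : ℤ)) *
        v ^ ((Fintype.card V : ℤ) - (numComp G.edgeFinset : ℤ)) *
        tutte G (((q : ℝ) + v) / v) (v + 1) := by
  classical
  have hexp : Real.exp (β * J) = v + 1 := by rw [hv]; ring
  have hvpos : (0:ℝ) < v + 1 := hexp ▸ Real.exp_pos _
  have hv1 : v + 1 ≠ 0 := ne_of_gt hvpos
  have hqR : (q : ℝ) ≠ 0 := Nat.cast_ne_zero.mpr hq.ne'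
  set E := G.edgeFinset with hE
  have step1 : (∑ σ : V → Fin q, Real.exp (-β * hamTwo G J σ))
      = ∑ A ∈ E.powerset, v ^ A.card * (q : ℝ) ^ numComp A * (v + 1) ^ (-(E.card : ℤ)) := by
    have hterm : ∀ σ : V → Fin q, Real.exp (-β * hamTwo G J σ)
        = ∏ e ∈ E, ((1 - (v+1)⁻¹) * (if (e.map σ).IsDiag then (1:ℝ) else 0) + (v+1)⁻¹) := by
      intro σ
      have h1 : -β * hamTwo G J σ
          = ((E.filter fun e => ¬ (e.map σ).IsDiag).card : ℕ) * (-(β * J)) := by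
        unfold hamTwo; rw [hE]; ring_nf
      rw [h1, Real.exp_nat_mul, Real.exp_neg, hexp]
      have hfac : ∀ e : Sym2 V,
          ((1 - (v+1)⁻¹) * (if (e.map σ).IsDiag then (1:ℝ) else 0) + (v+1)⁻¹)
            = if (e.map σ).IsDiag then (1:ℝ) else (v+1)⁻¹ := by
        intro e; split_ifs <;> ring
      simp only [hfac]
      rw [Finset.prod_ite, Finset.prod_const, Finset.prod_const, one_pow, one_mul]
    simp_rw [hterm, Finset.prod_add]
    rw [Finset.sum_comm]
    refine Finset.sum_congr rfl ?_
    intro A hA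
    rw [Finset.mem_powerset] at hA
    have hle : A.card ≤ E.card := Finset.card_le_card hA
    have h2 : ∀ σ : V → Fin q,
        (∏ e ∈ A, ((1 - (v+1)⁻¹) * (if (e.map σ).IsDiag then (1:ℝ) else 0))) *
          ∏ _e ∈ E \ A, (v+1)⁻¹
        = (1 - (v+1)⁻¹) ^ A.card * ((v+1)⁻¹) ^ (E.card - A.card) *
            (if ∀ e ∈ A, (e.map σ).IsDiag then (1:ℝ) else 0) := by
      intro σ
      rw [Finset.prod_mul_distrib, Finset.prod_const, Finset.prod_boole, Finset.prod_const,
        Finset.card_sdiff_of_subset hA]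
      ring
    simp_rw [h2]
    rw [← Finset.mul_sum, Finset.sum_boole, card_agree A q]
    have h1w : 1 - (v+1)⁻¹ = v * (v+1)⁻¹ := by field_simp; ring
    have halg : (1 - (v+1)⁻¹) ^ A.card * ((v+1)⁻¹) ^ (E.card - A.card)
        = v ^ A.card * (v + 1) ^ (-(E.card : ℤ)) := by
      rw [h1w, mul_pow, mul_assoc, ← pow_add, Nat.add_sub_cancel' hle, inv_pow,
        ← zpow_natCast (v+1), ← zpow_neg]
    rw [halg]
    push_cast
    ring
  rw [step1]
  unfold tutte
  have hx : ((q : ℝ) + v) / v - 1 = (q : ℝ) / v := by field_simp; ring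
  have hy : v + 1 - 1 = v := by ring
  rw [hx, hy, Finset.mul_sum]
  refine Finset.sum_congr rfl ?_
  intro A hA
  rw [← zpow_natCast v A.card, ← zpow_natCast (q:ℝ) (numComp A),
    ← zpow_natCast (q:ℝ) (numComp E)]
  exact (keyalg (q:ℝ) v ((v+1) ^ (-(E.card : ℤ))) hqR hv0 _ _ _ _).symm
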